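/- arXiv:2603.08367 — 2 statements merged into one kernel-verified Lean document; each statement's English description precedes it below -/
import Mathlib

section
/- Let E be a real inner product space, L > 0, and let f : E → ℝ be differentiable with L-Lipschitz gradient, i.e. ‖∇f(a) − ∇f(b)‖ ≤ L ‖a − b‖ for all a, b ∈ E. Then for all x, y, u ∈ E, f(y) ≤ f(x) + ⟨u, y − x⟩ + (3L/4) ‖y − x‖² + (1/L) ‖∇f(x) − u‖². -/
open RealInnerProductSpace

lemma fderiv_eq_inner_gradient
    {E : Type*} [NormedAddCommGroup E] [InnerProductSpace ℝ E] [CompleteSpace E]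
    (f : E → ℝ) (p v : E) : fderiv ℝ f p v = ⟪gradient f p, v⟫ := by
  rw [gradient]
  exact congrFun (congrArg _ ((InnerProductSpace.toDual ℝ E).apply_symm_apply (fderiv ℝ f p)).symm) v

lemma descent_lemma_aux
    {E : Type*} [NormedAddCommGroup E] [InnerProductSpace ℝ E] [CompleteSpace E]
    (L : ℝ) (hL : 0 < L) (f : E → ℝ) (hf : Differentiable ℝ f)
    (hlip : ∀ a b : E, ‖gradient f a - gradient f b‖ ≤ L * ‖a - b‖) (x y : E) :
    f y ≤ f x + ⟪gradient f x, y - x⟫ + (L / 2) * ‖y - x‖ ^ 2 := by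
  set v := y - x with hv
  have hγ : ∀ t : ℝ, HasDerivAt (fun t : ℝ => x + t • v) v t := fun t => by
    simpa using ((hasDerivAt_id t).smul_const v).const_add x
  have hg : ∀ t : ℝ, HasDerivAt (fun t : ℝ => f (x + t • v))
      (⟪gradient f (x + t • v), v⟫) t := fun t => by
    have := (hf (x + t • v)).hasFDerivAt.comp_hasDerivAt t (hγ t)
    rw [fderiv_eq_inner_gradient] at this
    exact this
  have hgradcont : Continuous (gradient f) := by
    have : LipschitzWith (Real.toNNReal L) (gradient f) :=
      LipschitzWith.of_dist_le_mul (fun a b => by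
        rw [dist_eq_norm, dist_eq_norm]
        simpa [Real.coe_toNNReal _ hL.le] using hlip a b)
    exact this.continuous
  have hcont : Continuous (fun t : ℝ => ⟪gradient f (x + t • v), v⟫) := by
    exact (hgradcont.comp (by continuity)).inner continuous_const
  have hint : f (x + (1:ℝ) • v) - f (x + (0:ℝ) • v)
      = ∫ t in (0:ℝ)..1, ⟪gradient f (x + t • v), v⟫ := by
    rw [← intervalIntegral.integral_eq_sub_of_hasDerivAt (fun t _ => hg t)
      (hcont.intervalIntegrable 0 1)]
  have key : f y - f x = ∫ t in (0:ℝ)..1, ⟪gradient f (x + t • v), v⟫ := by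
    simpa [hv] using hint
  have hbound : ∀ t ∈ Set.Icc (0:ℝ) 1,
      ⟪gradient f (x + t • v), v⟫ ≤ ⟪gradient f x, v⟫ + t * (L * ‖v‖ ^ 2) := by
    intro t ht
    have h1 : ⟪gradient f (x + t • v), v⟫ - ⟪gradient f x, v⟫
        = ⟪gradient f (x + t • v) - gradient f x, v⟫ := by
      rw [inner_sub_left]
    have h2 : ⟪gradient f (x + t • v) - gradient f x, v⟫ ≤ t * L * ‖v‖ ^ 2 := by
      calc ⟪gradient f (x + t • v) - gradient f x, v⟫
          ≤ ‖gradient f (x + t • v) - gradient f x‖ * ‖v‖ := real_inner_le_norm _ _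
        _ ≤ (L * ‖x + t • v - x‖) * ‖v‖ := by
            have := hlip (x + t • v) x
            nlinarith [norm_nonneg v]
        _ = t * L * ‖v‖ ^ 2 := by
            rw [add_sub_cancel_left, norm_smul, Real.norm_eq_abs, abs_of_nonneg ht.1]
            ring
    nlinarith
  have hineq : (∫ t in (0:ℝ)..1, ⟪gradient f (x + t • v), v⟫)
      ≤ ∫ t in (0:ℝ)..1, (⟪gradient f x, v⟫ + t * (L * ‖v‖ ^ 2)) := by
    apply intervalIntegral.integral_mono_on (by norm_num)
      (hcont.intervalIntegrable 0 1) (by apply Continuous.intervalIntegrable; continuity)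
    exact hbound
  have hval : (∫ t in (0:ℝ)..1, (⟪gradient f x, v⟫ + t * (L * ‖v‖ ^ 2)))
      = ⟪gradient f x, v⟫ + (L / 2) * ‖v‖ ^ 2 := by
    rw [intervalIntegral.integral_add (by apply Continuous.intervalIntegrable; continuity)
      (by apply Continuous.intervalIntegrable; continuity)]
    simp [intervalIntegral.integral_const_mul, integral_id]
    ring
  linarith [key ▸ (hval ▸ hineq)]

/-- Refined descent inequality with a surrogate gradient direction `u`
(first step of the proof of Lemma 5 of the paper). -/
theorem descent_with_surrogate_direction
    {E : Type*} [NormedAddCommGroup E] [InnerProductSpace ℝ E] [CompleteSpace E]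
    (L : ℝ) (hL : 0 < L) (f : E → ℝ) (hf : Differentiable ℝ f)
    (hlip : ∀ a b : E, ‖gradient f a - gradient f b‖ ≤ L * ‖a - b‖) :
    ∀ x y u : E,
      f y ≤ f x + ⟪u, y - x⟫ + (3 * L / 4) * ‖y - x‖ ^ 2 +
        (1 / L) * ‖gradient f x - u‖ ^ 2 := by
  intro x y u
  have hd := descent_lemma_aux L hL f hf hlip x y
  have hsplit : ⟪gradient f x, y - x⟫ = ⟪u, y - x⟫ + ⟪gradient f x - u, y - x⟫ := by
    rw [inner_sub_left]; ring
  have hcs : ⟪gradient f x - u, y - x⟫ ≤ ‖gradient f x - u‖ * ‖y - x‖ := real_inner_le_norm _ _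
  have hamgm : ‖gradient f x - u‖ * ‖y - x‖
      ≤ (1 / L) * ‖gradient f x - u‖ ^ 2 + (L / 4) * ‖y - x‖ ^ 2 := by
    rw [show (1 / L) * ‖gradient f x - u‖ ^ 2 + (L / 4) * ‖y - x‖ ^ 2
        = (‖gradient f x - u‖ ^ 2 + L ^ 2 / 4 * ‖y - x‖ ^ 2) / L by field_simp,
      le_div_iff₀ hL]
    nlinarith [sq_nonneg (2 * ‖gradient f x - u‖ - L * ‖y - x‖)]
  linarith
end

section
/- Let η ∈ (0,1) and let v, w : ℕ → ℝ be nonnegative sequences satisfying v(k+1) ≤ η v(k) + w(k) for all k ≥ 0. Then for every K ≥ 0, √(∑_{k=0}^K v(k)²) ≤ (√2/(1−η)) √(∑_{k=0}^K w(k)²) + √(2/(1−η²)) · v(0). -/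
open Finset

private lemma geom_partial_le {η : ℝ} (hη0 : 0 ≤ η) (hη1 : η < 1) (n : ℕ) :
    ∑ i ∈ range n, η ^ i ≤ 1 / (1 - η) := by
  have h1 : (0:ℝ) < 1 - η := by linarith
  have h2 : (∑ i ∈ range n, η ^ i) = (1 - η ^ n) / (1 - η) := by
    rw [geom_sum_eq (by linarith : η ≠ 1), div_eq_div_iff (by linarith) (by linarith : (1:ℝ) - η ≠ 0)]
    ring
  rw [h2]
  have hpn : (0:ℝ) ≤ η ^ n := pow_nonneg hη0 n
  gcongr
  linarith

private lemma sqrt_add_le_aux {a b : ℝ} (ha : 0 ≤ a) (hb : 0 ≤ b) :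
    Real.sqrt (a + b) ≤ Real.sqrt a + Real.sqrt b := by
  have h : a + b ≤ (Real.sqrt a + Real.sqrt b) ^ 2 := by
    have := Real.sqrt_nonneg a
    have := Real.sqrt_nonneg b
    nlinarith [Real.sq_sqrt ha, Real.sq_sqrt hb, mul_nonneg (Real.sqrt_nonneg a) (Real.sqrt_nonneg b)]
  calc Real.sqrt (a + b) ≤ Real.sqrt ((Real.sqrt a + Real.sqrt b) ^ 2) := Real.sqrt_le_sqrt h
    _ = Real.sqrt a + Real.sqrt b := Real.sqrt_sq (by positivity)

/-- Energy-comparison lemma for geometrically contracting recursions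
(Appendix D of the paper, citing Lemma 2 of Xie et al.): if
`v(k+1) ≤ η v(k) + w(k)` with `η ∈ (0,1)`, then
`√(∑_{k=0}^K v(k)²) ≤ (√2/(1−η)) √(∑_{k=0}^K w(k)²) + √(2/(1−η²)) v(0)`. -/
theorem energy_comparison
    (η : ℝ) (hη0 : 0 < η) (hη1 : η < 1)
    (v w : ℕ → ℝ) (hv : ∀ k, 0 ≤ v k) (hw : ∀ k, 0 ≤ w k)
    (hrec : ∀ k, v (k + 1) ≤ η * v k + w k) :
    ∀ K : ℕ,
      Real.sqrt (∑ k ∈ range (K + 1), (v k) ^ 2) ≤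
        (Real.sqrt 2 / (1 - η)) * Real.sqrt (∑ k ∈ range (K + 1), (w k) ^ 2) +
          Real.sqrt (2 / (1 - η ^ 2)) * v 0 := by
  intro K
  have h1η : (0:ℝ) < 1 - η := by linarith
  have h1η2 : (0:ℝ) < 1 - η ^ 2 := by nlinarith
  set c : ℕ → ℝ := fun k => ∑ j ∈ range k, η ^ (k - 1 - j) * w j with hc
  have hcnn : ∀ k, 0 ≤ c k := fun k =>
    Finset.sum_nonneg fun j _ => mul_nonneg (pow_nonneg hη0.le _) (hw j)
  -- pointwise bound v k ≤ η^k v 0 + c k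
  have hvb : ∀ k, v k ≤ η ^ k * v 0 + c k := by
    intro k
    induction k with
    | zero => simp [hc]
    | succ k ih =>
      have h2 := hrec k
      have : η * v k ≤ η * (η ^ k * v 0 + c k) :=
        mul_le_mul_of_nonneg_left ih hη0.le
      have hcs : c (k+1) = η * c k + w k := by
        simp only [hc]
        rw [Finset.sum_range_succ, Finset.mul_sum]
        congr 1
        · apply Finset.sum_congr rfl
          intro j hj
          rw [Finset.mem_range] at hj
          rw [← mul_assoc, ← pow_succ']
          congr 2
          omega
        · simp
      rw [hcs, pow_succ']
      nlinarith [hw k, hcnn k]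
  -- Cauchy-Schwarz per k: (c k)^2 ≤ (1/(1-η)) * ∑_j η^(k-1-j) (w j)^2
  have hCS : ∀ k, (c k) ^ 2 ≤ (1 / (1 - η)) * ∑ j ∈ range k, η ^ (k - 1 - j) * (w j) ^ 2 := by
    intro k
    have h := Finset.sum_mul_sq_le_sq_mul_sq (range k)
      (fun j => Real.sqrt (η ^ (k - 1 - j)))
      (fun j => Real.sqrt (η ^ (k - 1 - j)) * w j)
    have heq : ∀ j, Real.sqrt (η ^ (k - 1 - j)) * (Real.sqrt (η ^ (k - 1 - j)) * w j)
        = η ^ (k - 1 - j) * w j := by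
      intro j
      rw [← mul_assoc, Real.mul_self_sqrt (pow_nonneg hη0.le _)]
    have h2 : (c k) ^ 2 ≤ (∑ j ∈ range k, η ^ (k - 1 - j)) *
        (∑ j ∈ range k, η ^ (k - 1 - j) * (w j) ^ 2) := by
      calc (c k) ^ 2 = (∑ j ∈ range k, Real.sqrt (η ^ (k-1-j)) * (Real.sqrt (η ^ (k-1-j)) * w j)) ^ 2 := by
            simp only [hc]; congr 1; exact (Finset.sum_congr rfl fun j _ => (heq j).symm)
        _ ≤ (∑ j ∈ range k, Real.sqrt (η ^ (k-1-j)) ^ 2) *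
            (∑ j ∈ range k, (Real.sqrt (η ^ (k-1-j)) * w j) ^ 2) := h
        _ = (∑ j ∈ range k, η ^ (k - 1 - j)) * (∑ j ∈ range k, η ^ (k-1-j) * (w j) ^ 2) := by
            congr 1
            · exact Finset.sum_congr rfl fun j _ => Real.sq_sqrt (pow_nonneg hη0.le _)
            · refine Finset.sum_congr rfl fun j _ => ?_
              rw [mul_pow, Real.sq_sqrt (pow_nonneg hη0.le _)]
    have hgeo : (∑ j ∈ range k, η ^ (k - 1 - j)) ≤ 1 / (1 - η) := by
      have : (∑ j ∈ range k, η ^ (k - 1 - j)) = ∑ i ∈ range k, η ^ i := by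
        rw [← Finset.sum_range_reflect]
        exact Finset.sum_congr rfl fun j hj => by
          rw [Finset.mem_range] at hj; congr 1; omega
      rw [this]; exact geom_partial_le hη0.le hη1 k
    calc (c k) ^ 2 ≤ (∑ j ∈ range k, η ^ (k - 1 - j)) *
          (∑ j ∈ range k, η ^ (k - 1 - j) * (w j) ^ 2) := h2
      _ ≤ (1 / (1 - η)) * (∑ j ∈ range k, η ^ (k - 1 - j) * (w j) ^ 2) := by
          apply mul_le_mul_of_nonneg_right hgeo
          exact Finset.sum_nonneg fun j _ => mul_nonneg (pow_nonneg hη0.le _) (sq_nonneg _)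
  -- sum swap
  have hswap : ∑ k ∈ range (K+1), ∑ j ∈ range k, η ^ (k - 1 - j) * (w j) ^ 2
      ≤ (1 / (1 - η)) * ∑ j ∈ range (K+1), (w j) ^ 2 := by
    have hsw : ∑ k ∈ range (K+1), ∑ j ∈ range k, η ^ (k - 1 - j) * (w j) ^ 2
        = ∑ j ∈ range (K+1), ∑ k ∈ Finset.Ico (j+1) (K+1), η ^ (k - 1 - j) * (w j) ^ 2 := by
      have := Finset.sum_Ico_Ico_comm' 0 (K+1) (fun j k => η ^ (k - 1 - j) * (w j) ^ 2)
      simp only [Nat.Ico_zero_eq_range] at this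
      exact this.symm
    rw [hsw, Finset.mul_sum]
    apply Finset.sum_le_sum
    intro j hj
    have : ∑ k ∈ Finset.Ico (j+1) (K+1), η ^ (k - 1 - j) * (w j) ^ 2
        = (∑ i ∈ range (K+1 - (j+1)), η ^ i) * (w j) ^ 2 := by
      rw [Finset.sum_Ico_eq_sum_range, Finset.sum_mul]
      exact Finset.sum_congr rfl fun i _ => by congr 2; omega
    rw [this, mul_comm (1/(1-η))]
    rw [mul_comm ((w j)^2)]
    exact mul_le_mul_of_nonneg_right (geom_partial_le hη0.le hη1 _) (sq_nonneg _)
  -- main squared bound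
  have hmain : ∑ k ∈ range (K+1), (v k) ^ 2 ≤
      (2 / (1 - η) ^ 2) * ∑ k ∈ range (K+1), (w k) ^ 2 + (2 / (1 - η ^ 2)) * (v 0) ^ 2 := by
    have step1 : ∑ k ∈ range (K+1), (v k) ^ 2 ≤
        ∑ k ∈ range (K+1), (2 * (η ^ k * v 0) ^ 2 + 2 * (c k) ^ 2) := by
      apply Finset.sum_le_sum
      intro k _
      have h1 : (v k) ^ 2 ≤ (η ^ k * v 0 + c k) ^ 2 := by
        apply pow_le_pow_left₀ (hv k) (hvb k)
      nlinarith [sq_nonneg (η ^ k * v 0 - c k)]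
    have step2 : ∑ k ∈ range (K+1), 2 * (η ^ k * v 0) ^ 2 ≤ (2 / (1 - η ^ 2)) * (v 0) ^ 2 := by
      have : ∑ k ∈ range (K+1), 2 * (η ^ k * v 0) ^ 2
          = 2 * (v 0) ^ 2 * ∑ k ∈ range (K+1), (η ^ 2) ^ k := by
        rw [Finset.mul_sum]
        exact Finset.sum_congr rfl fun k _ => by ring
      rw [this]
      have hg := geom_partial_le (by positivity : (0:ℝ) ≤ η ^ 2) (by nlinarith) (K+1)
      calc 2 * (v 0) ^ 2 * ∑ k ∈ range (K+1), (η ^ 2) ^ k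
          ≤ 2 * (v 0) ^ 2 * (1 / (1 - η ^ 2)) := by
            apply mul_le_mul_of_nonneg_left hg (by positivity)
        _ = (2 / (1 - η ^ 2)) * (v 0) ^ 2 := by ring
    have step3 : ∑ k ∈ range (K+1), 2 * (c k) ^ 2 ≤
        (2 / (1 - η) ^ 2) * ∑ k ∈ range (K+1), (w k) ^ 2 := by
      calc ∑ k ∈ range (K+1), 2 * (c k) ^ 2
          ≤ ∑ k ∈ range (K+1), 2 * ((1 / (1 - η)) * ∑ j ∈ range k, η ^ (k-1-j) * (w j) ^ 2) := by
            apply Finset.sum_le_sum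
            intro k _
            exact mul_le_mul_of_nonneg_left (hCS k) (by norm_num)
        _ = 2 * (1 / (1 - η)) * ∑ k ∈ range (K+1), ∑ j ∈ range k, η ^ (k-1-j) * (w j) ^ 2 := by
            rw [Finset.mul_sum]; exact Finset.sum_congr rfl fun k _ => by ring
        _ ≤ 2 * (1 / (1 - η)) * ((1 / (1 - η)) * ∑ j ∈ range (K+1), (w j) ^ 2) := by
            apply mul_le_mul_of_nonneg_left hswap (by positivity)
        _ = (2 / (1 - η) ^ 2) * ∑ j ∈ range (K+1), (w j) ^ 2 := by
            have h12 : (1/(1-η)) * (1/(1-η)) = 1/(1-η)^2 := by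
              rw [div_mul_div_comm, one_mul, sq]
            calc 2 * (1/(1-η)) * ((1/(1-η)) * ∑ j ∈ range (K+1), (w j) ^ 2)
                = 2 * ((1/(1-η)) * (1/(1-η))) * ∑ j ∈ range (K+1), (w j) ^ 2 := by ring
              _ = 2 * (1/(1-η)^2) * ∑ j ∈ range (K+1), (w j) ^ 2 := by rw [h12]
              _ = (2 / (1 - η) ^ 2) * ∑ j ∈ range (K+1), (w j) ^ 2 := by ring
    calc ∑ k ∈ range (K+1), (v k) ^ 2
        ≤ ∑ k ∈ range (K+1), (2 * (η ^ k * v 0) ^ 2 + 2 * (c k) ^ 2) := step1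
      _ = ∑ k ∈ range (K+1), 2 * (η ^ k * v 0) ^ 2 + ∑ k ∈ range (K+1), 2 * (c k) ^ 2 := by
          rw [Finset.sum_add_distrib]
      _ ≤ (2 / (1 - η ^ 2)) * (v 0) ^ 2 + (2 / (1 - η) ^ 2) * ∑ k ∈ range (K+1), (w k) ^ 2 := by
          exact add_le_add step2 step3
      _ = (2 / (1 - η) ^ 2) * ∑ k ∈ range (K+1), (w k) ^ 2 + (2 / (1 - η ^ 2)) * (v 0) ^ 2 := by
          ring
  -- sqrt step
  have hA : Real.sqrt (∑ k ∈ range (K+1), (v k) ^ 2) ≤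
      Real.sqrt ((2 / (1 - η) ^ 2) * ∑ k ∈ range (K+1), (w k) ^ 2 + (2 / (1 - η ^ 2)) * (v 0) ^ 2) :=
    Real.sqrt_le_sqrt hmain
  have hanonneg : (0:ℝ) ≤ (2 / (1 - η) ^ 2) * ∑ k ∈ range (K+1), (w k) ^ 2 := by
    apply mul_nonneg (by positivity)
    exact Finset.sum_nonneg fun k _ => sq_nonneg _
  have hbnonneg : (0:ℝ) ≤ (2 / (1 - η ^ 2)) * (v 0) ^ 2 := by positivity
  have hsplit := sqrt_add_le_aux hanonneg hbnonneg
  have hW : (0:ℝ) ≤ ∑ k ∈ range (K+1), (w k) ^ 2 :=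
    Finset.sum_nonneg fun k _ => sq_nonneg _
  have e1 : Real.sqrt ((2 / (1 - η) ^ 2) * ∑ k ∈ range (K+1), (w k) ^ 2)
      = (Real.sqrt 2 / (1 - η)) * Real.sqrt (∑ k ∈ range (K+1), (w k) ^ 2) := by
    have : (2 / (1 - η) ^ 2) * ∑ k ∈ range (K+1), (w k) ^ 2
        = ((Real.sqrt 2 / (1 - η)) * Real.sqrt (∑ k ∈ range (K+1), (w k) ^ 2)) ^ 2 := by
      rw [mul_pow, div_pow, Real.sq_sqrt (by norm_num : (0:ℝ) ≤ 2), Real.sq_sqrt hW]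
    rw [this, Real.sqrt_sq]
    positivity
  have e2 : Real.sqrt ((2 / (1 - η ^ 2)) * (v 0) ^ 2)
      = Real.sqrt (2 / (1 - η ^ 2)) * v 0 := by
    rw [Real.sqrt_mul (by positivity), Real.sqrt_sq (hv 0)]
  calc Real.sqrt (∑ k ∈ range (K+1), (v k) ^ 2)
      ≤ _ := hA
    _ ≤ _ := hsplit
    _ = (Real.sqrt 2 / (1 - η)) * Real.sqrt (∑ k ∈ range (K+1), (w k) ^ 2)
        + Real.sqrt (2 / (1 - η ^ 2)) * v 0 := by rw [e1, e2]
end
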